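/- Define E*_{n,k}(α,β,q) by E_{n,k}(α,β,q) = q^(kβ + k(k-1)/2) · E*_{n,k}(α,β,q), where E_{n,k} satisfies E_{0,0}=1 and E_{n,k} = q^(β+k-1)[n-k+α]E_{n-1,k-1} + [k+β]E_{n-1,k}. Then E*_{n,k} satisfies E*_{n,k} = [n-k+α]·E*_{n-1,k-1} + [k+β]·E*_{n-1,k}, and consequently the symmetry E*_{n,k}(α,β,q) = E*_{n,n-k}(β,α,q) holds for all 0 ≤ k ≤ n. -/

import Mathlib

open Finset

noncomputable section

abbrev K : Type := RatFunc ℚ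

def qq : K := RatFunc.X

def qint (m : ℕ) : K := ∑ i ∈ Finset.range m, qq ^ i

def qfact (m : ℕ) : K := ∏ i ∈ Finset.range m, qint (i + 1)

def qbinom (a b : ℕ) : K := qfact a / (qfact b * qfact (a - b))

def E (α β : ℕ) : ℕ → ℕ → K
  | 0, k => if k = 0 then 1 else 0
  | n + 1, 0 => qint β * E α β n 0
  | n + 1, k + 1 =>
      qq ^ (β + k) * qint (n - k + α) * E α β n k + qint (k + 1 + β) * E α β n (k + 1)

def poch (N : ℕ) : PowerSeries K :=
  ∏ i ∈ Finset.range N, (1 - PowerSeries.C (qq ^ i) * PowerSeries.X)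

def Estar (α β n k : ℕ) : K := E α β n k / qq ^ (k * β + k * (k - 1) / 2)


lemma qq_ne_zero : qq ≠ 0 := RatFunc.X_ne_zero

lemma E_zero (α β : ℕ) : ∀ n k, n < k → E α β n k = 0 := by
  intro n
  induction n with
  | zero =>
    intro k h
    cases k with
    | zero => omega
    | succ j => simp [E]
  | succ m ih =>
    intro k h
    cases k with
    | zero => omega
    | succ j =>
      rw [E, ih j (by omega), ih (j+1) (by omega)]
      ring

lemma Estar_zero (α β : ℕ) (n k : ℕ) (h : n < k) : Estar α β n k = 0 := by
  rw [Estar, E_zero α β n k h, zero_div]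

lemma Estar_rec (α β : ℕ) (n k : ℕ) (hn : 1 ≤ n) (hk : k ≤ n) :
    Estar α β n k =
      qint (n - k + α) * (if k = 0 then 0 else Estar α β (n - 1) (k - 1)) +
      qint (k + β) * Estar α β (n - 1) k := by
  obtain ⟨m, rfl⟩ : ∃ m, n = m + 1 := ⟨n - 1, by omega⟩
  cases k with
  | zero => simp [Estar, E]
  | succ j =>
    have hX : (j+1) * ((j+1) - 1) / 2 = j * (j - 1) / 2 + j := by
      have h : (j+1) * ((j+1) - 1) = j * (j - 1) + j * 2 := by
        cases j with
        | zero => rfl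
        | succ i => simp [Nat.succ_sub_one]; ring
      rw [h, Nat.add_mul_div_right _ _ (by norm_num)]
    have hexp : (j+1) * β + (j+1) * ((j+1) - 1) / 2
        = (j * β + j * (j - 1) / 2) + (β + j) := by
      rw [hX, add_one_mul]; ring
    have h0 : qq ≠ 0 := qq_ne_zero
    have h2 : qq ^ (β + j) ≠ 0 := pow_ne_zero _ h0
    simp only [Estar, E, Nat.succ_sub_succ, Nat.sub_zero, Nat.add_sub_cancel,
      Nat.succ_ne_zero, if_false]
    have hexp' : (j+1) * β + (j+1) * j / 2 = (j * β + j * (j - 1) / 2) + (β + j) := by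
      simpa using hexp
    rw [hexp', add_div]
    congr 1
    · rw [pow_add qq (j * β + j * (j - 1) / 2) (β + j), mul_comm (qq ^ (j * β + j * (j - 1) / 2)) (qq ^ (β + j)),
        mul_assoc, mul_div_mul_left _ _ h2, mul_div_assoc]
    · rw [mul_div_assoc]

lemma Estar_symm (α β : ℕ) : ∀ n k, k ≤ n → Estar α β n k = Estar β α n (n - k) := by
  intro n
  induction n with
  | zero =>
    intro k hk
    interval_cases k
    simp [Estar, E]
  | succ m ih =>
    intro k hk
    rcases Nat.eq_zero_or_pos k with rfl | hk1
    · rw [Estar_rec α β (m+1) 0 (by omega) (by omega), Nat.sub_zero,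
          Estar_rec β α (m+1) (m+1) (by omega) le_rfl]
      simp [ih 0 (by omega), Estar_zero β α m (m+1) (by omega)]
    · rcases Nat.lt_or_ge k (m+1) with hkm | hkm
      · rw [Estar_rec α β (m+1) k (by omega) hk,
            Estar_rec β α (m+1) (m+1-k) (by omega) (by omega),
            if_neg (by omega : ¬ k = 0), if_neg (by omega : ¬ m+1-k = 0)]
        simp only [Nat.add_sub_cancel]
        rw [ih (k-1) (by omega), ih k (by omega)]
        have e1 : m + 1 - (m + 1 - k) = k := by omega
        have e2 : m + 1 - k - 1 = m - k := by omega
        have e3 : m - (k - 1) = m + 1 - k := by omega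
        rw [e1, e2, e3]
        ring
      · have hk2 : k = m + 1 := by omega
        subst hk2
        rw [Estar_rec α β (m+1) (m+1) (by omega) le_rfl,
            (show m+1-(m+1) = 0 from by omega),
            Estar_rec β α (m+1) 0 (by omega) (by omega)]
        simp [ih m (by omega), Estar_zero α β m (m+1) (by omega)]

theorem Estar_recurrence_and_symmetry (α β : ℕ) (hα : 1 ≤ α) (hβ : 1 ≤ β) :
    (∀ n k : ℕ, 1 ≤ n → k ≤ n →
      Estar α β n k =
        qint (n - k + α) * (if k = 0 then 0 else Estar α β (n - 1) (k - 1)) +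
        qint (k + β) * Estar α β (n - 1) k) ∧
    (∀ n k : ℕ, k ≤ n → Estar α β n k = Estar β α n (n - k)) := by
  exact ⟨fun n k hn hk => Estar_rec α β n k hn hk, fun n k hk => Estar_symm α β n k hk⟩

end
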